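/- Let eν, eρ ∈ ℝ³ be unit vectors that are not parallel (i.e. linearly independent), let q ∈ ℝ³, and let ρ > 0 satisfy ρ ≥ |q·eν|. Then there exist A, B ∈ ℝ with B ≥ 0 such that the vector R = A·eν + B·eρ satisfies ‖R‖ = ρ and (q + R)·eν = 0. -/

import Mathlib

open Real RealInnerProductSpace

/-- Solvability of the observation-correction step. -/
theorem correction_solvable (eν eρ : EuclideanSpace ℝ (Fin 3))
    (hν1 : ‖eν‖ = 1) (hρ1 : ‖eρ‖ = 1)
    (hind : LinearIndependent ℝ ![eν, eρ])
    (q : EuclideanSpace ℝ (Fin 3)) (ρ : ℝ) (hρ : 0 < ρ)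
    (hρq : ρ ≥ |⟪q, eν⟫|) :
    ∃ A B : ℝ, 0 ≤ B ∧
      ‖A • eν + B • eρ‖ = ρ ∧
      ⟪q + (A • eν + B • eρ), eν⟫ = 0 := by
  set s : ℝ := ⟪q, eν⟫ with hs
  set c : ℝ := ⟪eν, eρ⟫ with hc
  have hcle : |c| ≤ 1 := by
    have := abs_real_inner_le_norm eν eρ
    simpa [hν1, hρ1, hc] using this
  have hne1 : c ≠ 1 := by
    intro h
    have heq : eν = eρ := (inner_eq_one_iff_of_norm_eq_one hν1 hρ1).mp h
    have := Fintype.linearIndependent_iff.mp hind ![1, -1] (by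
      simp [Fin.sum_univ_two, heq]) 0
    norm_num at this
  have hnem1 : c ≠ -1 := by
    intro h
    have h' : ⟪eν, -eρ⟫ = 1 := by
      rw [inner_neg_right]; linarith
    have heq : eν = -eρ := (inner_eq_one_iff_of_norm_eq_one hν1 (by simpa using hρ1)).mp h'
    have hz : (1:ℝ) • eν + (1:ℝ) • eρ = 0 := by
      rw [heq]; simp
    have := Fintype.linearIndependent_iff.mp hind ![1, 1] (by
      simpa [Fin.sum_univ_two] using hz) 0
    norm_num at this
  have hclt : |c| < 1 := lt_of_le_of_ne hcle (by
    intro h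
    rcases abs_eq (by norm_num : (0:ℝ) ≤ 1) |>.mp h with h1 | h1
    · exact hne1 h1
    · exact hnem1 h1)
  have hc2 : 1 - c ^ 2 > 0 := by nlinarith [abs_nonneg c, sq_abs c, hclt]
  have hs2 : ρ ^ 2 - s ^ 2 ≥ 0 := by nlinarith [abs_nonneg s, sq_abs s, hρq]
  set B : ℝ := Real.sqrt ((ρ ^ 2 - s ^ 2) / (1 - c ^ 2)) with hB
  have hBnn : 0 ≤ B := Real.sqrt_nonneg _
  have hBsq : B ^ 2 = (ρ ^ 2 - s ^ 2) / (1 - c ^ 2) := by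
    rw [hB, Real.sq_sqrt (div_nonneg hs2 (le_of_lt hc2))]
  set A : ℝ := -s - B * c with hA
  refine ⟨A, B, hBnn, ?_, ?_⟩
  · have hnormsq : ‖A • eν + B • eρ‖ ^ 2 = ρ ^ 2 := by
      rw [norm_add_sq_real]
      rw [norm_smul, norm_smul, real_inner_smul_left, real_inner_smul_right]
      simp only [hν1, hρ1, norm_eq_abs, mul_one]
      rw [sq_abs, sq_abs, ← hc]
      have hB2 : B ^ 2 * (1 - c ^ 2) = ρ ^ 2 - s ^ 2 := by
        rw [hBsq, div_mul_cancel₀ _ (ne_of_gt hc2)]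
      have hAc : A + B * c = -s := by rw [hA]; ring
      linear_combination hB2 + (A + B * c - s) * hAc
    have hn : 0 ≤ ‖A • eν + B • eρ‖ := norm_nonneg _
    nlinarith
  · rw [inner_add_left, inner_add_left, real_inner_smul_left, real_inner_smul_left,
      real_inner_self_eq_norm_sq, hν1]
    have h1 : (inner ℝ eρ eν : ℝ) = c := by rw [hc, real_inner_comm]
    have h2 : (inner ℝ q eν : ℝ) = s := hs.symm
    rw [h1, h2, hA]
    ring
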